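/- The copula C(u,v) = uv + δ·(1 - exp(α(u-u²)))·(1 - exp(α(v-v²))) has upper tail dependence coefficient λ_U = lim_{u→1⁻} (1 - 2u + C(u,u))/(1-u) = 0. -/

import Mathlib

theorem stmt_13 (α δ : ℝ) (C : ℝ → ℝ → ℝ)
    (hC : ∀ u v, C u v = u*v + δ * (1 - Real.exp (α * (u - u^2))) * (1 - Real.exp (α * (v - v^2)))) :
    Filter.Tendsto (fun u => (1 - 2*u + C u u) / (1 - u)) (nhdsWithin 1 (Set.Iio 1)) (nhds 0) := by
  set F : ℝ → ℝ := fun u => 1 - Real.exp (α * (u - u^2)) with hF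
  have hF1 : F 1 = 0 := by simp [hF]
  have hderiv : HasDerivAt F α 1 := by
    have h1 : HasDerivAt (fun u : ℝ => α * (u - u^2)) (α * (1 - 2*1)) 1 := by
      have := ((hasDerivAt_id (1:ℝ)).sub ((hasDerivAt_pow 2 (1:ℝ)))).const_mul α
      simpa using this
    have h2 : HasDerivAt (fun u : ℝ => Real.exp (α * (u - u^2))) (Real.exp (α * (1 - 1^2)) * (α * (1 - 2*1))) 1 :=
      (Real.hasDerivAt_exp _).comp 1 h1
    have h3 := (hasDerivAt_const (1:ℝ) (1:ℝ)).sub h2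
    have e : (0:ℝ) - Real.exp (α * (1 - 1^2)) * (α * (1 - 2*1)) = α := by norm_num
    rw [e] at h3
    exact h3
  have hslope : Filter.Tendsto (fun u => F u / (u - 1)) (nhdsWithin 1 (Set.Iio 1)) (nhds α) := by
    have := hasDerivAt_iff_tendsto_slope.mp hderiv
    have h := this.mono_left (nhdsWithin_mono 1 (by
      intro x hx; simp only [Set.mem_compl_iff, Set.mem_singleton_iff]
      exact ne_of_lt hx))
    refine h.congr (fun u => ?_)
    simp [slope, hF1, div_eq_inv_mul]
  have hFz : Filter.Tendsto F (nhdsWithin 1 (Set.Iio 1)) (nhds 0) := by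
    have : Continuous F := by continuity
    have h := this.tendsto 1
    rw [hF1] at h
    exact h.mono_left nhdsWithin_le_nhds
  have h1u : Filter.Tendsto (fun u : ℝ => 1 - u) (nhdsWithin 1 (Set.Iio 1)) (nhds 0) := by
    have : Filter.Tendsto (fun u : ℝ => 1 - u) (nhds 1) (nhds (1 - 1)) :=
      (continuous_const.sub continuous_id).continuousAt.tendsto
    simpa using this.mono_left nhdsWithin_le_nhds
  have hmain : Filter.Tendsto (fun u => (1 - u) + (-δ) * (F u / (u - 1)) * F u)
      (nhdsWithin 1 (Set.Iio 1)) (nhds 0) := by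
    have := h1u.add (((hslope.const_mul (-δ)).mul hFz))
    simpa using this
  refine hmain.congr' ?_
  filter_upwards [self_mem_nhdsWithin] with u hu
  have hne : (1 : ℝ) - u ≠ 0 := by
    have : u < 1 := hu
    linarith
  have hne' : u - 1 ≠ 0 := by intro h; apply hne; linarith [h]
  rw [hC]
  field_simp
  simp only [hF]
  ring
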